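/- Let R be a commutative ring with unit and f ∈ R a nonzero element. The quotient ring S = R[u,v]/(uv - f) is an integral domain if and only if R is an integral domain. -/

import Mathlib

open MvPolynomial

/-- The suspension ring `S = R[u,v]/(uv - f)`. -/
abbrev Susp (R : Type*) [CommRing R] (f : R) : Type _ :=
  MvPolynomial (Fin 2) R ⧸
    Ideal.span {(X 0 * X 1 - C f : MvPolynomial (Fin 2) R)}

namespace SuspAux

open LaurentPolynomial

variable {R : Type*} [CommRing R] (f : R)

/-- The homomorphism `R[u,v] → R[T,T⁻¹]`, `u ↦ T`, `v ↦ f·T⁻¹`. -/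
noncomputable def Psi : MvPolynomial (Fin 2) R →+* LaurentPolynomial R :=
  (aeval ![T 1, LaurentPolynomial.C f * T (-1)]).toRingHom

theorem Psi_monomial (s : Fin 2 →₀ ℕ) (r : R) :
    Psi f (monomial s r) =
      LaurentPolynomial.C (r * f ^ (s 1)) * T ((s 0 : ℤ) - s 1) := by
  simp [Psi, aeval_monomial, Finsupp.prod_fintype, Fin.prod_univ_two, T_pow, mul_pow, map_mul,
    map_pow, sub_eq_neg_add]
  ring

theorem Psi_gen : Psi f (X 0 * X 1 - MvPolynomial.C f) = 0 := by
  simp [Psi, ← T_add]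

theorem Psi_C (r : R) : Psi f (MvPolynomial.C r) = LaurentPolynomial.C r := by
  simp [Psi, algebraMap_eq]

local notation "I" => Ideal.span {(X 0 * X 1 - MvPolynomial.C f : MvPolynomial (Fin 2) R)}

theorem Psi_of_mem (p : MvPolynomial (Fin 2) R) (hp : p ∈ I) : Psi f p = 0 := by
  rw [Ideal.mem_span_singleton] at hp
  obtain ⟨g, rfl⟩ := hp
  rw [map_mul, Psi_gen, zero_mul]

/-- Every element of `R[u,v]` is congruent modulo `(uv - f)` to a polynomial supported
on monomials that are pure powers of `u` or pure powers of `v`. -/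
theorem normal_exists (p : MvPolynomial (Fin 2) R) :
    ∃ q : MvPolynomial (Fin 2) R, (∀ m ∈ q.support, m 0 = 0 ∨ m 1 = 0) ∧
      Ideal.Quotient.mk I p = Ideal.Quotient.mk I q := by
  classical
  induction p using MvPolynomial.induction_on' with
  | add p₁ p₂ h₁ h₂ =>
    obtain ⟨q₁, hq₁, he₁⟩ := h₁
    obtain ⟨q₂, hq₂, he₂⟩ := h₂
    refine ⟨q₁ + q₂, fun m hm => ?_, by rw [RingHom.map_add, RingHom.map_add, he₁, he₂]⟩
    rcases Finset.mem_union.1 (MvPolynomial.support_add hm) with h | h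
    exacts [hq₁ m h, hq₂ m h]
  | monomial s r =>
    set m := min (s 0) (s 1) with hm
    set s' : Fin 2 →₀ ℕ := Finsupp.single 0 (s 0 - m) + Finsupp.single 1 (s 1 - m) with hs'
    have hs'0 : s' 0 = s 0 - m := by simp [hs', Finsupp.single_apply]
    have hs'1 : s' 1 = s 1 - m := by simp [hs', Finsupp.single_apply]
    refine ⟨monomial s' (f ^ m * r), fun m' hm' => ?_, ?_⟩
    · rw [MvPolynomial.support_monomial] at hm'
      split_ifs at hm' with h
      · exact absurd hm' (Finset.notMem_empty _)
      · rw [Finset.mem_singleton] at hm'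
        subst hm'
        rw [hs'0, hs'1]
        omega
    · have hsum : (Finsupp.single 0 (s 0 - m) + (Finsupp.single 1 (s 1 - m)
          + (Finsupp.single 0 m + Finsupp.single 1 m)) : Fin 2 →₀ ℕ) = s := by
        ext i
        fin_cases i <;> simp [Finsupp.single_apply] <;> omega
      have key : monomial s' r * (X 0 * X 1 : MvPolynomial (Fin 2) R) ^ m = monomial s r := by
        rw [mul_pow, MvPolynomial.X_pow_eq_monomial, MvPolynomial.X_pow_eq_monomial,
          monomial_mul, monomial_mul, mul_one, mul_one, hs', add_assoc, hsum]
      have hX : Ideal.Quotient.mk I (X 0 * X 1 : MvPolynomial (Fin 2) R)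
          = Ideal.Quotient.mk I (MvPolynomial.C f) := by
        rw [Ideal.Quotient.mk_eq_mk_iff_sub_mem]
        exact Ideal.mem_span_singleton_self _
      rw [← key, RingHom.map_mul, map_pow, hX, ← map_pow, ← RingHom.map_mul,
        mul_comm ((monomial s') r) (MvPolynomial.C f ^ m),
        ← MvPolynomial.C_pow, MvPolynomial.C_mul_monomial]

/-- When `R` is a domain and `f ≠ 0`, the map `Psi` is injective on normal forms. -/
theorem normal_zero [IsDomain R] (hf : f ≠ 0) (q : MvPolynomial (Fin 2) R)
    (hq : ∀ m ∈ q.support, m 0 = 0 ∨ m 1 = 0) (h : Psi f q = 0) : q = 0 := by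
  by_contra hne
  obtain ⟨s, hs⟩ := MvPolynomial.support_nonempty.2 hne
  have hrepr : Psi f q = ∑ m ∈ q.support,
      AddMonoidAlgebra.single ((m 0 : ℤ) - m 1) (MvPolynomial.coeff m q * f ^ (m 1)) := by
    conv_lhs => rw [MvPolynomial.as_sum q]
    rw [map_sum]
    exact Finset.sum_congr rfl fun m _ => by rw [Psi_monomial, single_eq_C_mul_T]
  have hco : (Psi f q).coeff ((s 0 : ℤ) - s 1) = MvPolynomial.coeff s q * f ^ (s 1) := by
    rw [hrepr, AddMonoidAlgebra.coeff_sum, Finset.sum_apply']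
    rw [Finset.sum_eq_single s]
    · rw [AddMonoidAlgebra.coeff_single, Finsupp.single_apply, if_pos rfl]
    · intro m hm hms
      rw [AddMonoidAlgebra.coeff_single, Finsupp.single_apply, if_neg]
      intro hkey
      apply hms
      have h1 := hq m hm
      have h2 := hq s hs
      ext i
      fin_cases i <;> simp <;> omega
    · exact fun h' => absurd hs h'
  rw [h, AddMonoidAlgebra.coeff_zero, Finsupp.coe_zero, Pi.zero_apply] at hco
  have : MvPolynomial.coeff s q = 0 := by
    rcases mul_eq_zero.1 hco.symm with h' | h'
    · exact h'
    · exact absurd h' (pow_ne_zero _ hf)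
  exact MvPolynomial.mem_support_iff.1 hs this

theorem mem_of_Psi_eq_zero [IsDomain R] (hf : f ≠ 0) (p : MvPolynomial (Fin 2) R)
    (h : Psi f p = 0) : p ∈ I := by
  obtain ⟨q, hq, he⟩ := normal_exists f p
  have hpq : p - q ∈ I := (Ideal.Quotient.mk_eq_mk_iff_sub_mem p q).1 he
  have hq0 : Psi f q = 0 := by
    have h2 := Psi_of_mem f _ hpq
    rw [map_sub, h, zero_sub, neg_eq_zero] at h2
    exact h2
  have : q = 0 := normal_zero f hf q hq hq0
  subst this
  simpa using hpq

end SuspAux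

set_option synthInstance.maxHeartbeats 1000000 in
set_option maxHeartbeats 1000000 in
/-- For nonzero `f`, the ring `S = R[u,v]/(uv - f)` is an integral domain
if and only if `R` is an integral domain. -/
theorem suspension_isDomain_iff (R : Type*) [CommRing R] (f : R) (hf : f ≠ 0) :
    IsDomain (Susp R f) ↔ IsDomain R := by
  constructor
  · intro hS
    refine Function.Injective.isDomain
      ((Ideal.Quotient.mk (Ideal.span {(X 0 * X 1 - C f : MvPolynomial (Fin 2) R)})).comp
        (MvPolynomial.C : R →+* MvPolynomial (Fin 2) R)) ?_
    rw [injective_iff_map_eq_zero]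
    intro r hr
    have hmem : (MvPolynomial.C r : MvPolynomial (Fin 2) R) ∈
        Ideal.span {(X 0 * X 1 - C f : MvPolynomial (Fin 2) R)} := by
      rwa [RingHom.comp_apply, Ideal.Quotient.eq_zero_iff_mem] at hr
    have h2 : LaurentPolynomial.C r = 0 := by
      rw [← SuspAux.Psi_C f]
      exact SuspAux.Psi_of_mem f _ hmem
    have := congrArg (fun x : LaurentPolynomial R => x.coeff 0) h2
    simpa [← LaurentPolynomial.single_eq_C_mul_T] using this
  · intro hR
    haveI : IsDomain (LaurentPolynomial R) := NoZeroDivisors.to_isDomain _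
    refine Function.Injective.isDomain
      (Ideal.Quotient.lift _ (SuspAux.Psi f) (fun a ha => SuspAux.Psi_of_mem f a ha)) ?_
    rw [injective_iff_map_eq_zero]
    intro a ha
    obtain ⟨p, rfl⟩ := Ideal.Quotient.mk_surjective a
    rw [Ideal.Quotient.lift_mk] at ha
    exact Ideal.Quotient.eq_zero_iff_mem.2 (SuspAux.mem_of_Psi_eq_zero f hf p ha)
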